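/- arXiv:2012.01422 — 3 statements merged into one kernel-verified Lean document; each statement's English description precedes it below -/
import Mathlib

section
/- Let h be the abelian Lie subalgebra of Der(ℂ[x,y]) spanned by ∂/∂x and ∂/∂y. The normalizer of h in the Lie algebra of all derivations of ℂ[x,y] consists exactly of the derivations of the form (a₁₁x + a₁₂y + c₁)·∂/∂x + (a₂₁x + a₂₂y + c₂)·∂/∂y with aᵢⱼ, cᵢ ∈ ℂ. -/
open MvPolynomial

noncomputable section

/-- The polynomial ring `ℂ[x,y]`, with `x = X 0`, `y = X 1`. -/
abbrev R2 : Type := MvPolynomial (Fin 2) ℂ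

/-- The Lie algebra of derivations of `ℂ[x,y]`. -/
abbrev Der2 : Type := Derivation ℂ R2 R2

/-- The variable `x`. -/
def Xv : R2 := X 0

/-- The variable `y`. -/
def Yv : R2 := X 1

/-- The vector field (derivation) `p·∂/∂x + q·∂/∂y`. -/
def vf (p q : R2) : Der2 := MvPolynomial.mkDerivation ℂ ![p, q]


lemma coeff_pderiv' (i : Fin 2) (p : R2) (m : Fin 2 →₀ ℕ) :
    coeff m (pderiv i p) = ((m i : ℂ) + 1) * coeff (m + Finsupp.single i 1) p := by
  conv_lhs => rw [← p.support_sum_monomial_coeff, map_sum]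
  simp only [pderiv_monomial, coeff_sum, coeff_monomial]
  rw [Finset.sum_eq_single (m + Finsupp.single i 1)]
  · simp [mul_comm]
  · intro s hs hne
    split_ifs with hsm
    · rcases Nat.eq_zero_or_pos (s i) with h0 | h1
      · simp [h0]
      · exfalso
        apply hne
        have hle : Finsupp.single i 1 ≤ s := Finsupp.single_le_iff.mpr h1
        have h2 := tsub_add_cancel_of_le hle
        rw [hsm] at h2
        exact h2.symm
    · rfl
  · intro h
    simp [notMem_support_iff.mp h]

lemma vf_X (p q : R2) (i : Fin 2) : vf p q (X i) = ![p, q] i :=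
  mkDerivation_X ..

lemma vf10_eq : vf 1 0 = pderiv (0 : Fin 2) := by
  apply derivation_ext
  intro i
  fin_cases i <;> simp [vf_X, pderiv_X]

lemma vf01_eq : vf 0 1 = pderiv (1 : Fin 2) := by
  apply derivation_ext
  intro i
  fin_cases i <;> simp [vf_X, pderiv_X]

lemma E_eq_vf (E : Der2) : E = vf (E Xv) (E Yv) := by
  apply derivation_ext
  intro i
  fin_cases i <;> simp [vf_X, Xv, Yv]

lemma smul_vf (a b : ℂ) : a • vf 1 0 + b • vf 0 1 = vf (C a) (C b) := by
  apply derivation_ext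
  intro i
  fin_cases i <;>
    simp [vf_X, smul_eq_C_mul]

lemma bracket_pderiv (E : Der2) (i : Fin 2) :
    ⁅E, pderiv i⁆ = vf (-(pderiv i (E Xv))) (-(pderiv i (E Yv))) := by
  apply derivation_ext
  intro j
  rw [Derivation.commutator_apply]
  fin_cases i <;> fin_cases j <;>
    simp [vf_X, pderiv_X, Xv, Yv, Derivation.map_one_eq_zero]

lemma affine_of_pderiv_const (p : R2) (a b : ℂ)
    (h0 : pderiv 0 p = C a) (h1 : pderiv 1 p = C b) :
    p = C a * Xv + C b * Yv + C (coeff 0 p) := by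
  have key : ∀ (i : Fin 2) (c : ℂ), pderiv i p = C c → ∀ m : Fin 2 →₀ ℕ,
      1 ≤ m i → m - Finsupp.single i 1 ≠ 0 → coeff m p = 0 := by
    intro i c h m hm1 hm2
    have hle : Finsupp.single i 1 ≤ m := Finsupp.single_le_iff.mpr hm1
    have hc := coeff_pderiv' i p (m - Finsupp.single i 1)
    rw [h, tsub_add_cancel_of_le hle, coeff_C, if_neg (fun h => hm2 h.symm)] at hc
    have hne : ((((m - Finsupp.single i 1 : Fin 2 →₀ ℕ) i : ℕ) : ℂ) + 1) ≠ 0 := by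
      exact Nat.cast_add_one_ne_zero _
    exact (mul_eq_zero.mp hc.symm).resolve_left hne
  have ha : coeff (Finsupp.single 0 1) p = a := by
    have hc := coeff_pderiv' 0 p 0
    rw [h0] at hc
    simpa using hc.symm
  have hb : coeff (Finsupp.single 1 1) p = b := by
    have hc := coeff_pderiv' 1 p 0
    rw [h1] at hc
    simpa using hc.symm
  ext m
  have hm01 : m = Finsupp.single (0 : Fin 2) (m 0) + Finsupp.single 1 (m 1) := by
    ext j
    fin_cases j <;> simp
  simp only [Xv, Yv, coeff_add, coeff_C_mul, coeff_C, coeff_X']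
  rcases Nat.eq_zero_or_pos (m 0) with h00 | h01
  · rcases Nat.eq_zero_or_pos (m 1) with h10 | h11
    · have hm0 : m = 0 := by rw [hm01, h00, h10]; simp
      subst hm0
      simp [Finsupp.single_eq_zero]
    · rcases Nat.lt_or_ge (m 1) 2 with h1lt | h1ge
      · have hm1 : m 1 = 1 := by omega
        have hm : m = Finsupp.single 1 1 := by rw [hm01, h00, hm1]; simp
        subst hm
        rw [hb]
        have h1 : ¬ Finsupp.single (0:Fin 2) 1 = Finsupp.single (1:Fin 2) 1 := by
          intro h; have := DFunLike.congr_fun h 0; simp at this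
        have h2 : ¬ (Finsupp.single (1:Fin 2) 1 = (0 : Fin 2 →₀ ℕ)) := by
          simp [Finsupp.single_eq_zero]
        simp [h1, h2, eq_comm]
      · have hz : coeff m p = 0 := by
          apply key 1 b h1 m (by omega)
          intro h
          have := DFunLike.congr_fun h 1
          simp at this
          omega
        rw [hz]
        have h1 : ¬ Finsupp.single (0:Fin 2) 1 = m := by
          intro h; have := DFunLike.congr_fun h 0; simp at this; omega
        have h2 : ¬ Finsupp.single (1:Fin 2) 1 = m := by
          intro h; have := DFunLike.congr_fun h 1; simp at this; omega
        have h3 : ¬ m = 0 := by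
          intro h; have := DFunLike.congr_fun h 1; simp at this; omega
        simp [h1, h2, h3, eq_comm]
  · rcases Nat.lt_or_ge (m 0) 2 with h0lt | h0ge
    · rcases Nat.eq_zero_or_pos (m 1) with h10 | h11
      · have hm0 : m 0 = 1 := by omega
        have hm : m = Finsupp.single 0 1 := by rw [hm01, hm0, h10]; simp
        subst hm
        rw [ha]
        have h1 : ¬ Finsupp.single (1:Fin 2) 1 = Finsupp.single (0:Fin 2) 1 := by
          intro h; have := DFunLike.congr_fun h 0; simp at this
        have h2 : ¬ (Finsupp.single (0:Fin 2) 1 = (0 : Fin 2 →₀ ℕ)) := by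
          simp [Finsupp.single_eq_zero]
        simp [h1, h2, eq_comm]
      · have hz : coeff m p = 0 := by
          apply key 0 a h0 m (by omega)
          intro h
          have := DFunLike.congr_fun h 1
          simp at this
          omega
        rw [hz]
        have h1 : ¬ Finsupp.single (0:Fin 2) 1 = m := by
          intro h; have := DFunLike.congr_fun h 1; simp at this; omega
        have h2 : ¬ Finsupp.single (1:Fin 2) 1 = m := by
          intro h; have := DFunLike.congr_fun h 0; simp at this; omega
        have h3 : ¬ m = 0 := by
          intro h; have := DFunLike.congr_fun h 0; simp at this; omega
        simp [h1, h2, h3, eq_comm]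
    · have hz : coeff m p = 0 := by
        apply key 0 a h0 m (by omega)
        intro h
        have := DFunLike.congr_fun h 0
        simp at this
        omega
      rw [hz]
      have h1 : ¬ Finsupp.single (0:Fin 2) 1 = m := by
        intro h; have := DFunLike.congr_fun h 0; simp at this; omega
      have h2 : ¬ Finsupp.single (1:Fin 2) 1 = m := by
        intro h; have := DFunLike.congr_fun h 0; simp at this; omega
      have h3 : ¬ m = 0 := by
        intro h; have := DFunLike.congr_fun h 0; simp at this; omega
      simp [h1, h2, h3, eq_comm]

lemma pderiv_affine (i : Fin 2) (a b c : ℂ) :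
    pderiv i (C a * Xv + C b * Yv + C c) = C (![a, b] i) := by
  fin_cases i <;>
    simp [Xv, Yv, pderiv_C_mul, pderiv_X]

/-- the normalizer of h = span{∂/∂x, ∂/∂y} in Der(ℂ[x,y]) consists exactly
of the affine vector fields (a₁₁x + a₁₂y + c₁)·∂/∂x + (a₂₁x + a₂₂y + c₂)·∂/∂y. -/
theorem stmt7 :
    {E : Der2 | ∀ W ∈ Submodule.span ℂ ({vf 1 0, vf 0 1} : Set Der2),
        ⁅E, W⁆ ∈ Submodule.span ℂ ({vf 1 0, vf 0 1} : Set Der2)} =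
      {E : Der2 | ∃ a₁₁ a₁₂ c₁ a₂₁ a₂₂ c₂ : ℂ,
        E = vf (C a₁₁ * Xv + C a₁₂ * Yv + C c₁) (C a₂₁ * Xv + C a₂₂ * Yv + C c₂)} := by
  ext E
  simp only [Set.mem_setOf_eq]
  constructor
  · intro h
    have h0 := h (vf 1 0) (Submodule.subset_span (by simp))
    have h1 := h (vf 0 1) (Submodule.subset_span (by simp))
    rw [Submodule.mem_span_pair] at h0 h1
    obtain ⟨a, b, hab⟩ := h0
    obtain ⟨c, d, hcd⟩ := h1
    rw [smul_vf, vf10_eq, bracket_pderiv] at hab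
    rw [smul_vf, vf01_eq, bracket_pderiv] at hcd
    have e1 : pderiv (0 : Fin 2) (E Xv) = C (-a) := by
      have := congrArg (fun D : Der2 => D (X 0)) hab
      simp only [vf_X] at this
      simp only [Matrix.cons_val_zero] at this
      rw [map_neg, this, neg_neg]
    have e2 : pderiv (0 : Fin 2) (E Yv) = C (-b) := by
      have := congrArg (fun D : Der2 => D (X 1)) hab
      simp only [vf_X] at this
      simp only [Matrix.cons_val_one, Matrix.head_cons, Matrix.cons_val_zero] at this
      rw [map_neg, this, neg_neg]
    have e3 : pderiv (1 : Fin 2) (E Xv) = C (-c) := by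
      have := congrArg (fun D : Der2 => D (X 0)) hcd
      simp only [vf_X] at this
      simp only [Matrix.cons_val_zero] at this
      rw [map_neg, this, neg_neg]
    have e4 : pderiv (1 : Fin 2) (E Yv) = C (-d) := by
      have := congrArg (fun D : Der2 => D (X 1)) hcd
      simp only [vf_X] at this
      simp only [Matrix.cons_val_one, Matrix.head_cons, Matrix.cons_val_zero] at this
      rw [map_neg, this, neg_neg]
    refine ⟨-a, -c, coeff 0 (E Xv), -b, -d, coeff 0 (E Yv), ?_⟩
    rw [← affine_of_pderiv_const (E Xv) (-a) (-c) e1 e3,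
        ← affine_of_pderiv_const (E Yv) (-b) (-d) e2 e4]
    exact E_eq_vf E
  · rintro ⟨a₁₁, a₁₂, c₁, a₂₁, a₂₂, c₂, rfl⟩
    intro W hW
    have key : ∀ i : Fin 2,
        ⁅vf (C a₁₁ * Xv + C a₁₂ * Yv + C c₁) (C a₂₁ * Xv + C a₂₂ * Yv + C c₂), pderiv i⁆ ∈
        Submodule.span ℂ ({vf 1 0, vf 0 1} : Set Der2) := by
      intro i
      rw [Submodule.mem_span_pair]
      refine ⟨-(![a₁₁, a₁₂] i), -(![a₂₁, a₂₂] i), ?_⟩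
      rw [smul_vf, bracket_pderiv]
      have hx : vf (C a₁₁ * Xv + C a₁₂ * Yv + C c₁) (C a₂₁ * Xv + C a₂₂ * Yv + C c₂) Xv
          = C a₁₁ * Xv + C a₁₂ * Yv + C c₁ :=
        vf_X _ _ 0
      have hy : vf (C a₁₁ * Xv + C a₁₂ * Yv + C c₁) (C a₂₁ * Xv + C a₂₂ * Yv + C c₂) Yv
          = C a₂₁ * Xv + C a₂₂ * Yv + C c₂ :=
        vf_X _ _ 1
      rw [hx, hy, pderiv_affine, pderiv_affine, map_neg, map_neg]
    induction hW using Submodule.span_induction with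
    | mem W hW =>
        rcases hW with rfl | rfl
        · have h0 := key 0; rwa [← vf10_eq] at h0
        · have h1 := key 1; rwa [← vf01_eq] at h1
    | zero =>
        have hz : ⁅vf (C a₁₁ * Xv + C a₁₂ * Yv + C c₁) (C a₂₁ * Xv + C a₂₂ * Yv + C c₂),
            (0 : Der2)⁆ = 0 := by
          ext f; simp [Derivation.commutator_apply]
        rw [hz]; exact Submodule.zero_mem _
    | add x y _ _ hx hy =>
        have hz : ⁅vf (C a₁₁ * Xv + C a₁₂ * Yv + C c₁) (C a₂₁ * Xv + C a₂₂ * Yv + C c₂),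
            x + y⁆ = ⁅vf (C a₁₁ * Xv + C a₁₂ * Yv + C c₁) (C a₂₁ * Xv + C a₂₂ * Yv + C c₂), x⁆
              + ⁅vf (C a₁₁ * Xv + C a₁₂ * Yv + C c₁) (C a₂₁ * Xv + C a₂₂ * Yv + C c₂), y⁆ := by
          ext f; simp [Derivation.commutator_apply]; ring
        rw [hz]; exact Submodule.add_mem _ hx hy
    | smul t x _ hx =>
        have hz : ⁅vf (C a₁₁ * Xv + C a₁₂ * Yv + C c₁) (C a₂₁ * Xv + C a₂₂ * Yv + C c₂),
            t • x⁆ = t • ⁅vf (C a₁₁ * Xv + C a₁₂ * Yv + C c₁) (C a₂₁ * Xv + C a₂₂ * Yv + C c₂), x⁆ := by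
          ext f; simp [Derivation.commutator_apply, smul_sub]
        rw [hz]; exact Submodule.smul_mem _ t hx
end
end

section
/- Every maximal solvable Lie subalgebra of gl(2,ℝ) is conjugate (by an element of GL(2,ℝ)) either to the algebra of upper triangular 2×2 real matrices, or to the algebra {a·I + b·J : a,b ∈ ℝ} where I is the identity matrix and J = [[0,1],[-1,0]]. -/
open Matrix

attribute [local instance 100] LieRing.ofAssociativeRing

namespace Stmt9
abbrev M2 := Matrix (Fin 2) (Fin 2) ℝ

noncomputable def Hm : M2 := !![1,0;0,-1]
noncomputable def Jm : M2 := !![0,1;-1,0]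
noncomputable def E01 : M2 := !![0,1;0,0]
noncomputable def E10 : M2 := !![0,0;1,0]

lemma lie_def' (A B : M2) : ⁅A, B⁆ = A * B - B * A := Ring.lie_def A B

/-- entries of a commutator -/
lemma lie_entries (A B : M2) :
    ⁅A, B⁆ = !![A 0 1 * B 1 0 - B 0 1 * A 1 0,
                A 0 0 * B 0 1 + A 0 1 * B 1 1 - (B 0 0 * A 0 1 + B 0 1 * A 1 1);
                A 1 0 * B 0 0 + A 1 1 * B 1 0 - (B 1 0 * A 0 0 + B 1 1 * A 1 0),
                A 1 0 * B 0 1 - B 1 0 * A 0 1] := by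
  rw [lie_def', eta_fin_two A, eta_fin_two B]
  simp [Matrix.mul_fin_two]
  ring_nf
  trivial

end Stmt9

namespace Stmt9

/-- upper triangular subalgebra -/
noncomputable def U : LieSubalgebra ℝ M2 where
  carrier := {B | B 1 0 = 0}
  add_mem' := by intro a b ha hb; simp_all [Set.mem_setOf_eq, Matrix.add_apply]
  zero_mem' := by simp
  smul_mem' := by intro c a ha; simp_all [Set.mem_setOf_eq]
  lie_mem' := by
    intro a b ha hb
    simp only [Set.mem_setOf_eq] at *
    rw [lie_entries]
    simp [ha, hb]

lemma mem_U {B : M2} : B ∈ U ↔ B 1 0 = 0 := Iff.rfl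

/-- lower triangular subalgebra -/
noncomputable def Lw : LieSubalgebra ℝ M2 where
  carrier := {B | B 0 1 = 0}
  add_mem' := by intro a b ha hb; simp_all [Set.mem_setOf_eq, Matrix.add_apply]
  zero_mem' := by simp
  smul_mem' := by intro c a ha; simp_all [Set.mem_setOf_eq]
  lie_mem' := by
    intro a b ha hb
    simp only [Set.mem_setOf_eq] at *
    rw [lie_entries]
    simp [ha, hb]

lemma mem_Lw {B : M2} : B ∈ Lw ↔ B 0 1 = 0 := Iff.rfl

/-- the algebra {aI + bJ} -/
noncomputable def Cs : LieSubalgebra ℝ M2 where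
  carrier := {B | B 0 0 = B 1 1 ∧ B 1 0 = -B 0 1}
  add_mem' := by
    intro a b ha hb
    simp only [Set.mem_setOf_eq, Matrix.add_apply] at *
    exact ⟨by rw [ha.1, hb.1], by rw [ha.2, hb.2]; ring⟩
  zero_mem' := by simp
  smul_mem' := by
    intro c a ha
    simp only [Set.mem_setOf_eq, Matrix.smul_apply, smul_eq_mul] at *
    exact ⟨by rw [ha.1], by rw [ha.2]; ring⟩
  lie_mem' := by
    intro a b ha hb
    simp only [Set.mem_setOf_eq] at *
    rw [lie_entries]
    constructor
    · show a 0 1 * b 1 0 - b 0 1 * a 1 0 = a 1 0 * b 0 1 - b 1 0 * a 0 1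
      rw [ha.2, hb.2]; ring
    · show a 1 0 * b 0 0 + a 1 1 * b 1 0 - (b 1 0 * a 0 0 + b 1 1 * a 1 0) =
        -(a 0 0 * b 0 1 + a 0 1 * b 1 1 - (b 0 0 * a 0 1 + b 0 1 * a 1 1))
      rw [ha.1, ha.2, hb.1, hb.2]; ring

lemma mem_Cs {B : M2} : B ∈ Cs ↔ B 0 0 = B 1 1 ∧ B 1 0 = -B 0 1 := Iff.rfl

lemma mem_Cs_iff {B : M2} : B ∈ Cs ↔ ∃ a b : ℝ, B = a • (1 : M2) + b • !![0,1;-1,0] := by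
  constructor
  · rintro ⟨h1, h2⟩
    refine ⟨B 0 0, B 0 1, ?_⟩
    rw [eta_fin_two B, h1, h2]
    ext i j
    fin_cases i <;> fin_cases j <;> simp [Matrix.one_apply]
  · rintro ⟨a, b, rfl⟩
    constructor <;> simp [Matrix.one_apply]

end Stmt9

namespace Stmt9

lemma ggi (g : GL (Fin 2) ℝ) : (↑g : M2) * (↑g⁻¹ : M2) = 1 := Units.mul_inv g

lemma gig (g : GL (Fin 2) ℝ) : (↑g⁻¹ : M2) * (↑g : M2) = 1 := Units.inv_mul g

lemma conj_mul (g : GL (Fin 2) ℝ) (A B : M2) :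
    ((g : M2) * A * (↑g⁻¹ : M2)) * ((g : M2) * B * (↑g⁻¹ : M2)) = (g : M2) * (A * B) * (↑g⁻¹ : M2) := by
  have h := gig g
  calc ((g : M2) * A * (↑g⁻¹ : M2)) * ((g : M2) * B * (↑g⁻¹ : M2))
      = (g : M2) * A * ((↑g⁻¹ * ↑g) * B) * (↑g⁻¹ : M2) := by noncomm_ring
    _ = (g : M2) * (A * B) * (↑g⁻¹ : M2) := by rw [h]; noncomm_ring

lemma conj_lie (g : GL (Fin 2) ℝ) (A B : M2) :
    ⁅(g : M2) * A * (↑g⁻¹ : M2), (g : M2) * B * (↑g⁻¹ : M2)⁆ = (g : M2) * ⁅A, B⁆ * (↑g⁻¹ : M2) := by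
  rw [lie_def', lie_def', conj_mul, conj_mul]
  noncomm_ring

noncomputable def conjSub (g : GL (Fin 2) ℝ) (T : LieSubalgebra ℝ M2) : LieSubalgebra ℝ M2 where
  carrier := {B | ∃ A ∈ T, B = (g : M2) * A * (↑g⁻¹ : M2)}
  add_mem' := by
    rintro a b ⟨A, hA, rfl⟩ ⟨B, hB, rfl⟩
    exact ⟨A + B, T.add_mem hA hB, by noncomm_ring⟩
  zero_mem' := ⟨0, T.zero_mem, by simp⟩
  smul_mem' := by
    rintro c a ⟨A, hA, rfl⟩
    refine ⟨c • A, T.smul_mem c hA, ?_⟩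
    simp [Matrix.mul_smul, Matrix.smul_mul]
  lie_mem' := by
    rintro a b ⟨A, hA, rfl⟩ ⟨B, hB, rfl⟩
    exact ⟨⁅A, B⁆, T.lie_mem hA hB, conj_lie g A B⟩

lemma mem_conjSub {g : GL (Fin 2) ℝ} {T : LieSubalgebra ℝ M2} {B : M2} :
    B ∈ conjSub g T ↔ ∃ A ∈ T, B = (g : M2) * A * (↑g⁻¹ : M2) := Iff.rfl

lemma conjSub_coe (g : GL (Fin 2) ℝ) (T : LieSubalgebra ℝ M2) :
    (conjSub g T : Set M2) = {B | ∃ A ∈ T, B = (g : M2) * A * (↑g⁻¹ : M2)} := rfl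

end Stmt9

namespace Stmt9

lemma conjSub_one (T : LieSubalgebra ℝ M2) : conjSub 1 T = T := by
  ext B
  rw [mem_conjSub]
  constructor
  · rintro ⟨A, hA, rfl⟩; simpa using hA
  · intro hB; exact ⟨B, hB, by simp⟩

lemma conjSub_comp (h g : GL (Fin 2) ℝ) (T : LieSubalgebra ℝ M2) :
    conjSub h (conjSub g T) = conjSub (h * g) T := by
  ext B
  rw [mem_conjSub, mem_conjSub]
  constructor
  · rintro ⟨A, ⟨A', hA', rfl⟩, rfl⟩
    refine ⟨A', hA', ?_⟩
    simp only [Units.val_mul, _root_.mul_inv_rev]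
    noncomm_ring
  · rintro ⟨A, hA, rfl⟩
    refine ⟨(g : M2) * A * (↑g⁻¹ : M2), ⟨A, hA, rfl⟩, ?_⟩
    simp only [Units.val_mul, _root_.mul_inv_rev]
    noncomm_ring

lemma conjSub_inv_cancel (g : GL (Fin 2) ℝ) (T : LieSubalgebra ℝ M2) :
    conjSub g (conjSub g⁻¹ T) = T := by
  rw [conjSub_comp, mul_inv_cancel, conjSub_one]

/-- transport solvability along conjugation -/
lemma isSolvable_conjSub (g : GL (Fin 2) ℝ) (T : LieSubalgebra ℝ M2)
    (h : LieAlgebra.IsSolvable T) : LieAlgebra.IsSolvable (conjSub g T) := by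
  let f : T →ₗ⁅ℝ⁆ (conjSub g T) :=
    { toFun := fun x => ⟨(g : M2) * (x : M2) * (↑g⁻¹ : M2), ⟨x, x.2, rfl⟩⟩
      map_add' := by
        intro x y
        apply Subtype.ext
        push_cast
        noncomm_ring
      map_smul' := by
        intro c x
        apply Subtype.ext
        show (g : M2) * ((c • x : T) : M2) * (↑g⁻¹ : M2) = c • ((g : M2) * (x : M2) * (↑g⁻¹ : M2))
        rw [Submodule.coe_smul_of_tower]
        simp [Matrix.smul_mul, Matrix.mul_smul]
      map_lie' := by
        intro x y
        apply Subtype.ext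
        simp only [LieSubalgebra.coe_bracket]
        exact (conj_lie g x y).symm }
  have hsurj : Function.Surjective f := by
    rintro ⟨B, A, hA, rfl⟩
    exact ⟨⟨A, hA⟩, rfl⟩
  exact hsurj.lieAlgebra_isSolvable

end Stmt9

namespace Stmt9

open LieAlgebra in
lemma isSolvable_of_twoStep (T : LieSubalgebra ℝ M2)
    (h : ∀ x y z w : M2, x ∈ T → y ∈ T → z ∈ T → w ∈ T → ⁅⁅x,y⁆,⁅z,w⁆⁆ = 0) :
    LieAlgebra.IsSolvable T := by
  refine (isSolvable_iff ℝ T).mpr ⟨2, ?_⟩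
  have h2 : derivedSeries ℝ T 2 = ⁅derivedSeries ℝ T 1, derivedSeries ℝ T 1⁆ := by
    rw [derivedSeries_def, derivedSeries_def, derivedSeriesOfIdeal_succ]
  rw [h2, eq_bot_iff, LieSubmodule.lie_le_iff]
  -- brackets are zero
  have key : ∀ x : ↥T, x ∈ derivedSeries ℝ T 1 → ∀ m : ↥T, m ∈ derivedSeries ℝ T 1 →
      ⁅x, m⁆ = 0 := by
    have hspan : ∀ x : ↥T, x ∈ derivedSeries ℝ T 1 →
        x ∈ Submodule.span ℝ {m : ↥T | ∃ a ∈ (⊤ : LieIdeal ℝ ↥T), ∃ b ∈ (⊤ : LieIdeal ℝ ↥T), ⁅a, b⁆ = m} := by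
      intro x hx
      have : derivedSeries ℝ T 1 = ⁅(⊤ : LieIdeal ℝ ↥T), (⊤ : LieIdeal ℝ ↥T)⁆ := by
        rw [derivedSeries_def, derivedSeriesOfIdeal_succ, derivedSeriesOfIdeal_zero]
      rw [this] at hx
      rw [← LieSubmodule.mem_toSubmodule, LieSubmodule.lieIdeal_oper_eq_linear_span'] at hx
      exact hx
    intro x hx m hm
    replace hx := hspan x hx
    replace hm := hspan m hm
    clear hspan
    induction hx using Submodule.span_induction with
    | mem x hxg =>
      induction hm using Submodule.span_induction with
      | mem m hmg =>
        obtain ⟨a, -, b, -, rfl⟩ := hxg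
        obtain ⟨c, -, d, -, rfl⟩ := hmg
        apply Subtype.ext
        simp only [LieSubalgebra.coe_bracket, ZeroMemClass.coe_zero]
        exact h a b c d a.2 b.2 c.2 d.2
      | zero => simp
      | add m₁ m₂ _ _ ih1 ih2 => rw [lie_add, ih1, ih2, add_zero]
      | smul c m₁ _ ih => rw [lie_smul, ih, smul_zero]
    | zero => simp
    | add x₁ x₂ _ _ ih1 ih2 => rw [add_lie, ih1 , ih2, add_zero]
    | smul c x₁ _ ih => rw [smul_lie, ih, smul_zero]
  intro x hx m hm
  rw [LieSubmodule.mem_bot]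
  exact key x hx m hm

end Stmt9

namespace Stmt9

lemma strict_lie {a b : M2} (ha : a ∈ U) (hb : b ∈ U) :
    ⁅a,b⁆ 1 0 = 0 ∧ ⁅a,b⁆ 0 0 = 0 ∧ ⁅a,b⁆ 1 1 = 0 := by
  rw [mem_U] at ha hb
  rw [lie_entries]
  refine ⟨?_, ?_, ?_⟩
  · show a 1 0 * b 0 0 + a 1 1 * b 1 0 - (b 1 0 * a 0 0 + b 1 1 * a 1 0) = 0
    rw [ha, hb]; ring
  · show a 0 1 * b 1 0 - b 0 1 * a 1 0 = 0
    rw [ha, hb]; ring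
  · show a 1 0 * b 0 1 - b 1 0 * a 0 1 = 0
    rw [ha, hb]; ring

lemma strict_lie_zero {a b : M2} (ha0 : a 1 0 = 0) (ha1 : a 0 0 = 0) (ha2 : a 1 1 = 0)
    (hb0 : b 1 0 = 0) (hb1 : b 0 0 = 0) (hb2 : b 1 1 = 0) : ⁅a,b⁆ = 0 := by
  rw [lie_entries, ha0, ha1, ha2, hb0, hb1, hb2]
  norm_num
  ext i j
  fin_cases i <;> fin_cases j <;> simp

lemma isSolvable_U : LieAlgebra.IsSolvable U := by
  apply isSolvable_of_twoStep
  intro x y z w hx hy hz hw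
  obtain ⟨h1, h2, h3⟩ := strict_lie hx hy
  obtain ⟨h4, h5, h6⟩ := strict_lie hz hw
  exact strict_lie_zero h1 h2 h3 h4 h5 h6

lemma isSolvable_Cs : LieAlgebra.IsSolvable Cs := by
  apply isSolvable_of_twoStep
  intro x y z w hx hy hz hw
  rw [mem_Cs] at hx hy
  have : ⁅x, y⁆ = 0 := by
    rw [lie_entries]
    have e1 : x 0 1 * y 1 0 - y 0 1 * x 1 0 = 0 := by rw [hx.2, hy.2]; ring
    have e2 : x 0 0 * y 0 1 + x 0 1 * y 1 1 - (y 0 0 * x 0 1 + y 0 1 * x 1 1) = 0 := by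
      rw [hx.1, hy.1]; ring
    have e3 : x 1 0 * y 0 0 + x 1 1 * y 1 0 - (y 1 0 * x 0 0 + y 1 1 * x 1 0) = 0 := by
      rw [hx.1, hx.2, hy.1, hy.2]; ring
    have e4 : x 1 0 * y 0 1 - y 1 0 * x 0 1 = 0 := by rw [hx.2, hy.2]; ring
    rw [e1, e2, e3, e4]
    ext i j
    fin_cases i <;> fin_cases j <;> simp
  rw [this, zero_lie]

end Stmt9

namespace Stmt9

lemma sigma_mul_self : (!![0,1;1,0] : M2) * !![0,1;1,0] = 1 := by
  rw [Matrix.mul_fin_two]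
  norm_num
  ext i j
  fin_cases i <;> fin_cases j <;> simp [Matrix.one_apply]

def σu : GL (Fin 2) ℝ := ⟨!![0,1;1,0], !![0,1;1,0], sigma_mul_self, sigma_mul_self⟩

lemma σu_val : (σu : M2) = !![0,1;1,0] := rfl
lemma σu_inv_val : ((σu⁻¹ : GL (Fin 2) ℝ) : M2) = !![0,1;1,0] := rfl

lemma conjSub_mono (g : GL (Fin 2) ℝ) {T T' : LieSubalgebra ℝ M2} (h : T ≤ T') :
    conjSub g T ≤ conjSub g T' := by
  rintro B ⟨A, hA, rfl⟩
  exact ⟨A, h hA, rfl⟩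

lemma conjSub_sigma_Lw_le_U : conjSub σu Lw ≤ U := by
  rintro B ⟨A, hA, rfl⟩
  rw [mem_Lw] at hA
  rw [mem_U, σu_val, σu_inv_val]
  rw [eta_fin_two A, Matrix.mul_fin_two, Matrix.mul_fin_two]
  show (1 * A 0 0 + 0 * A 1 0) * 0 + (1 * A 0 1 + 0 * A 1 1) * 1 = 0
  rw [hA]; ring

end Stmt9

namespace Stmt9

lemma endgame (S : LieSubalgebra ℝ M2)
    (hmax : ∀ T : LieSubalgebra ℝ M2, LieAlgebra.IsSolvable T → S ≤ T → S = T)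
    (g : GL (Fin 2) ℝ) (W : LieSubalgebra ℝ M2) (hWs : LieAlgebra.IsSolvable W)
    (hle : conjSub g S ≤ W) :
    {B : M2 | ∃ A ∈ S, B = (g : M2) * A * (↑g⁻¹ : M2)} = (W : Set M2) := by
  have hT : S ≤ conjSub g⁻¹ W := by
    intro A hA
    refine ⟨(g : M2) * A * (↑g⁻¹ : M2), hle ⟨A, hA, rfl⟩, ?_⟩
    rw [inv_inv]
    calc A = ((↑g⁻¹ : M2) * (g : M2)) * A * ((↑g⁻¹ : M2) * (g : M2)) := by rw [gig]; noncomm_ring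
    _ = (↑g⁻¹ : M2) * ((g : M2) * A * (↑g⁻¹ : M2)) * (g : M2) := by noncomm_ring
  have hS : S = conjSub g⁻¹ W := hmax _ (isSolvable_conjSub g⁻¹ W hWs) hT
  have : conjSub g S = W := by rw [hS, conjSub_inv_cancel]
  rw [← this]
  rfl

end Stmt9

namespace Stmt9

open LieAlgebra in
/-- a subalgebra containing an sl2-like triple is not solvable -/
lemma not_solvable_triple (T : LieSubalgebra ℝ M2) (x y z : M2)
    (hx : x ∈ T) (hy : y ∈ T) (hz : z ∈ T) (α β γ : ℝ)
    (hxy : ⁅x, y⁆ = α • z) (hxz : ⁅x, z⁆ = β • y) (hyz : ⁅y, z⁆ = γ • x)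
    (hα : α ≠ 0) (hβ : β ≠ 0) (hγ : γ ≠ 0) (hx0 : x ≠ 0) :
    ¬ LieAlgebra.IsSolvable T := by
  intro hsolv
  obtain ⟨k, hk⟩ := (isSolvable_iff ℝ T).mp hsolv
  have key : ∀ n : ℕ, (⟨x, hx⟩ : ↥T) ∈ derivedSeries ℝ T n ∧
      (⟨y, hy⟩ : ↥T) ∈ derivedSeries ℝ T n ∧ (⟨z, hz⟩ : ↥T) ∈ derivedSeries ℝ T n := by
    intro n
    induction n with
    | zero => exact ⟨LieSubmodule.mem_top _, LieSubmodule.mem_top _, LieSubmodule.mem_top _⟩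
    | succ n ih =>
      obtain ⟨ihx, ihy, ihz⟩ := ih
      have hstep : derivedSeries ℝ T (n+1) = ⁅derivedSeries ℝ T n, derivedSeries ℝ T n⁆ := by
        rw [derivedSeries_def, derivedSeries_def, derivedSeriesOfIdeal_succ]
      rw [hstep]
      have bxy : ⁅(⟨x, hx⟩ : ↥T), (⟨y, hy⟩ : ↥T)⁆ ∈ ⁅derivedSeries ℝ T n, derivedSeries ℝ T n⁆ :=
        LieSubmodule.lie_mem_lie ihx ihy
      have bxz : ⁅(⟨x, hx⟩ : ↥T), (⟨z, hz⟩ : ↥T)⁆ ∈ ⁅derivedSeries ℝ T n, derivedSeries ℝ T n⁆ :=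
        LieSubmodule.lie_mem_lie ihx ihz
      have byz : ⁅(⟨y, hy⟩ : ↥T), (⟨z, hz⟩ : ↥T)⁆ ∈ ⁅derivedSeries ℝ T n, derivedSeries ℝ T n⁆ :=
        LieSubmodule.lie_mem_lie ihy ihz
      refine ⟨?_, ?_, ?_⟩
      · have : (⟨x, hx⟩ : ↥T) = γ⁻¹ • ⁅(⟨y, hy⟩ : ↥T), (⟨z, hz⟩ : ↥T)⁆ := by
          apply Subtype.ext
          show x = γ⁻¹ • ⁅y, z⁆
          rw [hyz, smul_smul, inv_mul_cancel₀ hγ, one_smul]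
        rw [this]
        exact (⁅derivedSeries ℝ T n, derivedSeries ℝ T n⁆).smul_mem γ⁻¹ byz
      · have : (⟨y, hy⟩ : ↥T) = β⁻¹ • ⁅(⟨x, hx⟩ : ↥T), (⟨z, hz⟩ : ↥T)⁆ := by
          apply Subtype.ext
          show y = β⁻¹ • ⁅x, z⁆
          rw [hxz, smul_smul, inv_mul_cancel₀ hβ, one_smul]
        rw [this]
        exact (⁅derivedSeries ℝ T n, derivedSeries ℝ T n⁆).smul_mem β⁻¹ bxz
      · have : (⟨z, hz⟩ : ↥T) = α⁻¹ • ⁅(⟨x, hx⟩ : ↥T), (⟨y, hy⟩ : ↥T)⁆ := by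
          apply Subtype.ext
          show z = α⁻¹ • ⁅x, y⁆
          rw [hxy, smul_smul, inv_mul_cancel₀ hα, one_smul]
        rw [this]
        exact (⁅derivedSeries ℝ T n, derivedSeries ℝ T n⁆).smul_mem α⁻¹ bxy
  have := (key k).1
  rw [hk, LieSubmodule.mem_bot] at this
  exact hx0 (by simpa using congrArg Subtype.val this)

end Stmt9


namespace Stmt9

lemma conj_of_rel (P W Z : M2) (hP : P.det ≠ 0) (hrel : Z * P = P * W) :
    ∃ g : GL (Fin 2) ℝ, (↑g : M2) * Z * (↑g⁻¹ : M2) = W := by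
  let u : GL (Fin 2) ℝ := Matrix.GeneralLinearGroup.mkOfDetNeZero P hP
  have hu : (↑u : M2) = P := rfl
  refine ⟨u⁻¹, ?_⟩
  rw [inv_inv]
  have h1 : (↑u⁻¹ : M2) * (↑u : M2) = 1 := Units.inv_mul u
  calc (↑u⁻¹ : M2) * Z * (↑u : M2) = (↑u⁻¹ : M2) * (Z * P) := by rw [hu]; noncomm_ring
    _ = (↑u⁻¹ : M2) * P * W := by rw [hrel]; noncomm_ring
    _ = W := by rw [← hu, h1, one_mul]

lemma det_fin_two' (a b c d : ℝ) : (!![a,b;c,d] : M2).det = a*d - b*c := by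
  simp [Matrix.det_fin_two]

lemma canon (Z : M2) (hZ : Z ≠ 0) (htr : Z 1 1 = - Z 0 0) :
    ∃ g : GL (Fin 2) ℝ,
      (∃ μ : ℝ, μ ≠ 0 ∧ (↑g : M2) * Z * (↑g⁻¹ : M2) = μ • Hm) ∨
      (∃ μ : ℝ, μ ≠ 0 ∧ (↑g : M2) * Z * (↑g⁻¹ : M2) = μ • Jm) ∨
      ((↑g : M2) * Z * (↑g⁻¹ : M2) = E01) := by
  set p := Z 0 0 with hp
  set q := Z 0 1 with hq
  set r := Z 1 0 with hr
  have hZform : Z = !![p, q; r, -p] := by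
    rw [eta_fin_two Z, htr]
  set δ : ℝ := p^2 + q*r with hδ
  rcases lt_trichotomy δ 0 with hneg | hzero | hpos
  · -- δ < 0 : conjugate to μ • Jm
    have hq0 : q ≠ 0 := by
      intro h; rw [h] at hδ; nlinarith [sq_nonneg p]
    have hr0 : r ≠ 0 := by
      intro h; rw [h] at hδ; nlinarith [sq_nonneg p]
    set μ : ℝ := Real.sqrt (-δ) with hμ
    have hμpos : 0 < μ := Real.sqrt_pos.mpr (by linarith)
    have hμ2 : μ * μ = -δ := Real.mul_self_sqrt (by linarith)
    have hμ0 : μ ≠ 0 := ne_of_gt hμpos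
    obtain ⟨g, hg⟩ := conj_of_rel !![p/μ, 1; r/μ, 0] (μ • Jm) Z
      (by rw [det_fin_two']; field_simp; exact div_ne_zero (by simpa using hr0) hμ0)
      (by
        rw [hZform, Jm]
        ext i j
        fin_cases i <;> fin_cases j <;>
          simp [Matrix.mul_apply, Fin.sum_univ_two] <;> field_simp <;> nlinarith)
    exact ⟨g, Or.inr (Or.inl ⟨μ, hμ0, hg⟩)⟩
  · -- δ = 0 : conjugate to E01
    by_cases hr0 : r ≠ 0
    · obtain ⟨g, hg⟩ := conj_of_rel !![p, 1; r, 0] E01 Z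
        (by rw [det_fin_two']; simpa using hr0)
        (by
          rw [hZform, E01]
          ext i j
          fin_cases i <;> fin_cases j <;>
            simp [Matrix.mul_apply, Fin.sum_univ_two] <;> nlinarith)
      exact ⟨g, Or.inr (Or.inr hg)⟩
    · push_neg at hr0
      have hp0 : p = 0 := by
        have : p^2 = 0 := by rw [hr0] at hδ; nlinarith
        exact pow_eq_zero_iff (n := 2) (by norm_num) |>.mp this
      have hq0 : q ≠ 0 := by
        intro h
        apply hZ
        rw [hZform, hp0, hr0, h]
        ext i j; fin_cases i <;> fin_cases j <;> simp
      obtain ⟨g, hg⟩ := conj_of_rel !![q, 0; 0, 1] E01 Z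
        (by rw [det_fin_two']; simpa using hq0)
        (by
          rw [hZform, E01, hp0, hr0]
          ext i j
          fin_cases i <;> fin_cases j <;>
            simp [Matrix.mul_apply, Fin.sum_univ_two])
      exact ⟨g, Or.inr (Or.inr hg)⟩
  · -- δ > 0 : conjugate to μ • Hm
    set μ : ℝ := Real.sqrt δ with hμ
    have hμpos : 0 < μ := Real.sqrt_pos.mpr hpos
    have hμ2 : μ * μ = δ := Real.mul_self_sqrt (le_of_lt hpos)
    have hμ0 : μ ≠ 0 := ne_of_gt hμpos
    by_cases hq0 : q ≠ 0
    · obtain ⟨g, hg⟩ := conj_of_rel !![q, q; μ - p, -μ - p] (μ • Hm) Z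
        (by
          rw [det_fin_two']
          intro h
          have h2 : q * (2 * μ) = 0 := by linear_combination -h
          rcases mul_eq_zero.mp h2 with h3 | h3
          · exact hq0 h3
          · exact hμ0 (by linarith))
        (by
          rw [hZform, Hm]
          ext i j
          fin_cases i <;> fin_cases j <;>
            simp [Matrix.mul_apply, Fin.sum_univ_two] <;> nlinarith)
      exact ⟨g, Or.inl ⟨μ, hμ0, hg⟩⟩
    · push_neg at hq0
      have hp0 : p ≠ 0 := by
        intro h; rw [h, hq0] at hδ; norm_num at hδ; exact absurd hδ (by linarith)
      obtain ⟨g, hg⟩ := conj_of_rel !![2*p, 0; r, 1] (p • Hm) Z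
        (by rw [det_fin_two']; simpa using hp0)
        (by
          rw [hZform, Hm, hq0]
          ext i j
          fin_cases i <;> fin_cases j <;>
            simp [Matrix.mul_apply, Fin.sum_univ_two] <;> ring)
      exact ⟨g, Or.inl ⟨p, hp0, hg⟩⟩
end Stmt9



namespace Stmt9

lemma lieHm (Y : M2) : ⁅Hm, Y⁆ = !![0, 2*Y 0 1; -(2*Y 1 0), 0] := by
  rw [lie_entries]; ext i j; fin_cases i <;> fin_cases j <;> simp [Hm] <;> ring

lemma lieJm (Y : M2) : ⁅Jm, Y⁆ =
    !![Y 0 1 + Y 1 0, Y 1 1 - Y 0 0; Y 1 1 - Y 0 0, -(Y 0 1 + Y 1 0)] := by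
  rw [lie_entries]; ext i j; fin_cases i <;> fin_cases j <;> simp [Jm] <;> ring

lemma lieE01 (Y : M2) : ⁅E01, Y⁆ = !![Y 1 0, Y 1 1 - Y 0 0; 0, -(Y 1 0)] := by
  rw [lie_entries]; ext i j; fin_cases i <;> fin_cases j <;> simp [E01] <;> ring

lemma lie_shift (s μ : ℝ) (W Y : M2) : ⁅s•(1:M2) + μ•W, Y⁆ = μ • ⁅W, Y⁆ := by
  have h1 : ⁅(1:M2), Y⁆ = 0 := by rw [lie_def']; simp
  rw [add_lie, smul_lie, smul_lie, h1, smul_zero, zero_add]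

-- membership extraction for the H case
lemma extractH (S' : LieSubalgebra ℝ M2) (s μ : ℝ) (hμ : μ ≠ 0)
    (hX : s•(1:M2) + μ•Hm ∈ S') (Y : M2) (hY : Y ∈ S') :
    !![0, Y 0 1; 0, 0] ∈ S' ∧ !![0, 0; Y 1 0, 0] ∈ S' := by
  set b := Y 0 1
  set c := Y 1 0
  have hV1 : ⁅s•(1:M2) + μ•Hm, Y⁆ ∈ S' := S'.lie_mem hX hY
  have e1 : ⁅s•(1:M2) + μ•Hm, Y⁆ = μ • !![0, 2*b; -(2*c), 0] := by
    rw [lie_shift, lieHm]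
  have hV2 : ⁅s•(1:M2) + μ•Hm, μ • !![0, 2*b; -(2*c), 0]⁆ ∈ S' := by
    rw [← e1]
    exact S'.lie_mem hX hV1
  have e2 : ⁅s•(1:M2) + μ•Hm, μ • !![0, 2*b; -(2*c), 0]⁆ = μ • (μ • !![0, 4*b; 4*c, 0]) := by
    rw [lie_smul, lie_shift, lieHm]
    congr 2
    ext i j
    fin_cases i <;> fin_cases j <;> simp <;> ring
  rw [e1] at hV1
  rw [e2] at hV2
  constructor
  · have m1 : !![0, b; 0, 0] = (1/(8*μ*μ)) • (μ • (μ • !![0, 4*b; 4*c, 0]))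
        + (1/(4*μ)) • (μ • !![0, 2*b; -(2*c), 0]) := by
      ext i j
      fin_cases i <;> fin_cases j <;> simp <;> field_simp <;> ring
    rw [m1]
    exact S'.add_mem (S'.smul_mem _ hV2) (S'.smul_mem _ hV1)
  · have m2 : !![0, 0; c, 0] = (1/(8*μ*μ)) • (μ • (μ • !![0, 4*b; 4*c, 0]))
        - (1/(4*μ)) • (μ • !![0, 2*b; -(2*c), 0]) := by
      ext i j
      fin_cases i <;> fin_cases j <;> simp <;> field_simp <;> ring
    rw [m2]
    exact S'.sub_mem (S'.smul_mem _ hV2) (S'.smul_mem _ hV1)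

end Stmt9

namespace Stmt9

lemma mem_of_smul_mem (S' : LieSubalgebra ℝ M2) {c : ℝ} (hc : c ≠ 0) {A : M2}
    (h : c • A ∈ S') : A ∈ S' := by
  have := S'.smul_mem c⁻¹ h
  rwa [smul_smul, inv_mul_cancel₀ hc, one_smul] at this

lemma Hm_ne_zero : Hm ≠ 0 := by
  intro h
  have := congrFun (congrFun h 0) 0
  simp [Hm] at this

lemma Jm_ne_zero : Jm ≠ 0 := by
  intro h
  have := congrFun (congrFun h 0) 1
  simp [Jm] at this

lemma lie_E01_E10 : ⁅E01, E10⁆ = Hm := by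
  rw [lieE01]
  ext i j; fin_cases i <;> fin_cases j <;> simp [E10, Hm]

lemma keyH (S' : LieSubalgebra ℝ M2) (hsolv : LieAlgebra.IsSolvable S') (s μ : ℝ) (hμ : μ ≠ 0)
    (hX : s•(1:M2) + μ•Hm ∈ S') : S' ≤ U ∨ S' ≤ Lw ∨ S' ≤ Cs := by
  by_cases hU' : ∀ Y ∈ S', Y 1 0 = 0
  · exact Or.inl fun Y hY => hU' Y hY
  push_neg at hU'
  obtain ⟨Y₀, hY₀, hc₀⟩ := hU'
  have hE10 : E10 ∈ S' := by
    have h := (extractH S' s μ hμ hX Y₀ hY₀).2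
    apply mem_of_smul_mem S' hc₀
    have e : (Y₀ 1 0) • E10 = !![0, 0; Y₀ 1 0, 0] := by
      ext i j; fin_cases i <;> fin_cases j <;> simp [E10]
    rwa [e]
  by_cases hL' : ∀ Y ∈ S', Y 0 1 = 0
  · exact Or.inr (Or.inl fun Y hY => hL' Y hY)
  push_neg at hL'
  obtain ⟨Y₁, hY₁, hb₁⟩ := hL'
  have hE01 : E01 ∈ S' := by
    have h := (extractH S' s μ hμ hX Y₁ hY₁).1
    apply mem_of_smul_mem S' hb₁
    have e : (Y₁ 0 1) • E01 = !![0, Y₁ 0 1; 0, 0] := by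
      ext i j; fin_cases i <;> fin_cases j <;> simp [E01]
    rwa [e]
  exfalso
  have hHm : Hm ∈ S' := by
    have := S'.lie_mem hE01 hE10
    rwa [lie_E01_E10] at this
  refine not_solvable_triple S' Hm (E01+E10) (E01-E10) hHm (S'.add_mem hE01 hE10)
    (S'.sub_mem hE01 hE10) 2 2 (-2) ?_ ?_ ?_ (by norm_num) (by norm_num) (by norm_num)
    Hm_ne_zero hsolv
  · rw [lieHm]
    ext i j; fin_cases i <;> fin_cases j <;> simp [E01, E10] <;> norm_num
  · rw [lieHm]
    ext i j; fin_cases i <;> fin_cases j <;> simp [E01, E10] <;> norm_num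
  · rw [lie_entries]
    ext i j; fin_cases i <;> fin_cases j <;> simp [E01, E10, Hm] <;> norm_num

end Stmt9

namespace Stmt9

lemma keyE (S' : LieSubalgebra ℝ M2) (hsolv : LieAlgebra.IsSolvable S') (s μ : ℝ) (hμ : μ ≠ 0)
    (hX : s•(1:M2) + μ•E01 ∈ S') : S' ≤ U ∨ S' ≤ Lw ∨ S' ≤ Cs := by
  by_cases hU' : ∀ Y ∈ S', Y 1 0 = 0
  · exact Or.inl fun Y hY => hU' Y hY
  exfalso
  push_neg at hU'
  obtain ⟨Y₀, hY₀, hc₀⟩ := hU'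
  set c := Y₀ 1 0 with hc
  set k := Y₀ 1 1 - Y₀ 0 0 with hk
  have hV1 : ⁅s•(1:M2) + μ•E01, Y₀⁆ ∈ S' := S'.lie_mem hX hY₀
  have e1 : ⁅s•(1:M2) + μ•E01, Y₀⁆ = μ • !![c, k; 0, -c] := by
    rw [lie_shift, lieE01]
  rw [e1] at hV1
  -- second bracket gives E01 (scaled)
  have hV2 : ⁅μ • !![c, k; 0, -c], s•(1:M2) + μ•E01⁆ ∈ S' := S'.lie_mem hV1 hX
  have e2 : ⁅μ • !![c, k; 0, -c], s•(1:M2) + μ•E01⁆ = (2*c*μ*μ) • E01 := by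
    rw [← lie_skew, lie_shift, lieE01]
    ext i j; fin_cases i <;> fin_cases j <;> simp [E01] <;> ring
  rw [e2] at hV2
  have hE01 : E01 ∈ S' := mem_of_smul_mem S' (by
    have : (2:ℝ)*c*μ*μ ≠ 0 := by positivity
    exact this) hV2
  -- recover Hm
  have hHm : Hm ∈ S' := by
    have h3 : μ • !![c, k; 0, -c] - (μ * k) • E01 ∈ S' :=
      S'.sub_mem hV1 (S'.smul_mem _ hE01)
    apply mem_of_smul_mem S' (mul_ne_zero hμ hc₀)
    have e3 : (μ * c) • Hm = μ • !![c, k; 0, -c] - (μ * k) • E01 := by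
      ext i j; fin_cases i <;> fin_cases j <;> simp [E01, Hm] <;> ring
    rwa [e3]
  -- recover E10
  have hE10 : E10 ∈ S' := by
    have h4 : ⁅Hm, Y₀⁆ ∈ S' := S'.lie_mem hHm hY₀
    rw [lieHm] at h4
    have h5 : (2 * Y₀ 0 1) • E01 - !![0, 2*Y₀ 0 1; -(2*c), 0] ∈ S' :=
      S'.sub_mem (S'.smul_mem _ hE01) h4
    apply mem_of_smul_mem S' (show (2:ℝ)*c ≠ 0 by positivity)
    have e4 : (2*c) • E10 = (2 * Y₀ 0 1) • E01 - !![0, 2*Y₀ 0 1; -(2*c), 0] := by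
      ext i j; fin_cases i <;> fin_cases j <;> simp [E01, E10] <;> ring
    rwa [e4]
  refine not_solvable_triple S' Hm (E01+E10) (E01-E10) hHm (S'.add_mem hE01 hE10)
    (S'.sub_mem hE01 hE10) 2 2 (-2) ?_ ?_ ?_ (by norm_num) (by norm_num) (by norm_num)
    Hm_ne_zero hsolv
  · rw [lieHm]
    ext i j; fin_cases i <;> fin_cases j <;> simp [E01, E10] <;> norm_num
  · rw [lieHm]
    ext i j; fin_cases i <;> fin_cases j <;> simp [E01, E10] <;> norm_num
  · rw [lie_entries]
    ext i j; fin_cases i <;> fin_cases j <;> simp [E01, E10, Hm] <;> norm_num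

end Stmt9

namespace Stmt9

lemma extractJ (S' : LieSubalgebra ℝ M2) (s μ : ℝ) (hμ : μ ≠ 0)
    (hX : s•(1:M2) + μ•Jm ∈ S') (Y : M2) (hY : Y ∈ S') :
    !![Y 0 1 + Y 1 0, Y 1 1 - Y 0 0; Y 1 1 - Y 0 0, -(Y 0 1 + Y 1 0)] ∈ S' ∧
    !![Y 1 1 - Y 0 0, -(Y 0 1 + Y 1 0); -(Y 0 1 + Y 1 0), -(Y 1 1 - Y 0 0)] ∈ S' := by
  set e := Y 0 1 + Y 1 0 with he
  set f := Y 1 1 - Y 0 0 with hf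
  have hV1 : ⁅s•(1:M2) + μ•Jm, Y⁆ ∈ S' := S'.lie_mem hX hY
  have e1 : ⁅s•(1:M2) + μ•Jm, Y⁆ = μ • !![e, f; f, -e] := by
    rw [lie_shift, lieJm]
  rw [e1] at hV1
  have hV2 : ⁅s•(1:M2) + μ•Jm, μ • !![e, f; f, -e]⁆ ∈ S' := S'.lie_mem hX hV1
  have e2 : ⁅s•(1:M2) + μ•Jm, μ • !![e, f; f, -e]⁆ = μ • (μ • ((2:ℝ) • !![f, -e; -e, -f])) := by
    rw [lie_smul, lie_shift, lieJm]
    congr 2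
    ext i j; fin_cases i <;> fin_cases j <;> simp <;> ring
  rw [e2] at hV2
  constructor
  · exact mem_of_smul_mem S' hμ hV1
  · have := mem_of_smul_mem S' hμ (mem_of_smul_mem S' hμ hV2)
    exact mem_of_smul_mem S' (two_ne_zero) this

lemma keyJ (S' : LieSubalgebra ℝ M2) (hsolv : LieAlgebra.IsSolvable S') (s μ : ℝ) (hμ : μ ≠ 0)
    (hX : s•(1:M2) + μ•Jm ∈ S') : S' ≤ U ∨ S' ≤ Lw ∨ S' ≤ Cs := by
  by_cases hC' : ∀ Y ∈ S', Y 0 0 = Y 1 1 ∧ Y 1 0 = - Y 0 1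
  · exact Or.inr (Or.inr fun Y hY => (hC' Y hY))
  exfalso
  push_neg at hC'
  obtain ⟨Y₀, hY₀, hcd⟩ := hC'
  set e := Y₀ 0 1 + Y₀ 1 0 with he
  set f := Y₀ 1 1 - Y₀ 0 0 with hf
  have hef : e^2 + f^2 ≠ 0 := by
    intro h
    have he0 : e = 0 := by nlinarith [sq_nonneg e, sq_nonneg f]
    have hf0 : f = 0 := by nlinarith [sq_nonneg e, sq_nonneg f]
    rcases hcd (by rw [hf] at hf0; linarith) with h'
    rw [he] at he0
    exact h' (by linarith)
  obtain ⟨hMe, hMf⟩ := extractJ S' s μ hμ hX Y₀ hY₀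
  set Me : M2 := !![e, f; f, -e] with hMe'
  set Mf : M2 := !![f, -e; -e, -f] with hMf'
  have hJm : Jm ∈ S' := by
    have hb : ⁅Me, Mf⁆ ∈ S' := S'.lie_mem hMe hMf
    have eb : ⁅Me, Mf⁆ = (-(2*(e^2+f^2))) • Jm := by
      rw [lie_entries]
      ext i j; fin_cases i <;> fin_cases j <;> simp [Me, Mf, Jm] <;> ring
    rw [eb] at hb
    exact mem_of_smul_mem S' (by simpa using hef) hb
  refine not_solvable_triple S' Jm Me Mf hJm hMe hMf 2 (-2) (-(2*(e^2+f^2)))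
    ?_ ?_ ?_ (by norm_num) (by norm_num) (by simpa using hef) Jm_ne_zero hsolv
  · rw [lieJm]
    ext i j; fin_cases i <;> fin_cases j <;> simp [Me, Mf] <;> ring
  · rw [lieJm]
    ext i j; fin_cases i <;> fin_cases j <;> simp [Me, Mf] <;> ring
  · rw [lie_entries]
    ext i j; fin_cases i <;> fin_cases j <;> simp [Me, Mf, Jm] <;> ring

end Stmt9

namespace Stmt9

lemma Cs_coe : (Cs : Set M2) = {B : M2 | ∃ a b : ℝ, B = a • (1 : M2) + b • !![0, 1; -1, 0]} :=
  Set.ext fun _ => mem_Cs_iff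

/-- main classification -/
theorem main (S : LieSubalgebra ℝ M2)
    (hsolv : LieAlgebra.IsSolvable S)
    (hmax : ∀ T : LieSubalgebra ℝ M2, LieAlgebra.IsSolvable T → S ≤ T → S = T) :
    ∃ g : GL (Fin 2) ℝ,
      {B : M2 | ∃ A ∈ S, B = (g : M2) * A * (↑g⁻¹ : M2)} = {B : M2 | B 1 0 = 0} ∨
      {B : M2 | ∃ A ∈ S, B = (g : M2) * A * (↑g⁻¹ : M2)} =
          {B : M2 | ∃ a b : ℝ, B = a • (1 : M2) + b • !![0, 1; -1, 0]} := by
  classical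
  -- helper to conclude from a containment in U after conjugating by g
  have finishU : ∀ g : GL (Fin 2) ℝ, conjSub g S ≤ U →
      {B : M2 | ∃ A ∈ S, B = (g : M2) * A * (↑g⁻¹ : M2)} = {B : M2 | B 1 0 = 0} := by
    intro g hle
    exact endgame S hmax g U isSolvable_U hle
  have finishC : ∀ g : GL (Fin 2) ℝ, conjSub g S ≤ Cs →
      {B : M2 | ∃ A ∈ S, B = (g : M2) * A * (↑g⁻¹ : M2)} =
        {B : M2 | ∃ a b : ℝ, B = a • (1 : M2) + b • !![0, 1; -1, 0]} := by
    intro g hle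
    rw [endgame S hmax g Cs isSolvable_Cs hle, Cs_coe]
  have finishL : ∀ g : GL (Fin 2) ℝ, conjSub g S ≤ Lw →
      {B : M2 | ∃ A ∈ S, B = ((σu * g : GL (Fin 2) ℝ) : M2) * A * (↑(σu * g)⁻¹ : M2)} =
        {B : M2 | B 1 0 = 0} := by
    intro g hle
    apply finishU (σu * g)
    rw [← conjSub_comp]
    exact le_trans (conjSub_mono σu hle) conjSub_sigma_Lw_le_U
  -- three-way exit
  have exits : ∀ g : GL (Fin 2) ℝ, (conjSub g S ≤ U ∨ conjSub g S ≤ Lw ∨ conjSub g S ≤ Cs) →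
      ∃ g' : GL (Fin 2) ℝ,
        {B : M2 | ∃ A ∈ S, B = (g' : M2) * A * (↑g'⁻¹ : M2)} = {B : M2 | B 1 0 = 0} ∨
        {B : M2 | ∃ A ∈ S, B = (g' : M2) * A * (↑g'⁻¹ : M2)} =
            {B : M2 | ∃ a b : ℝ, B = a • (1 : M2) + b • !![0, 1; -1, 0]} := by
    rintro g (h | h | h)
    · exact ⟨g, Or.inl (finishU g h)⟩
    · exact ⟨σu * g, Or.inl (finishL g h)⟩
    · exact ⟨g, Or.inr (finishC g h)⟩
  by_cases hns : ∃ X ∈ S, X - ((X 0 0 + X 1 1)/2) • (1:M2) ≠ 0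
  · obtain ⟨X, hXS, hZ0⟩ := hns
    set a : ℝ := (X 0 0 + X 1 1)/2 with ha
    set Z : M2 := X - a • 1 with hZdef
    have htr : Z 1 1 = - Z 0 0 := by
      simp only [hZdef, Matrix.sub_apply, Matrix.smul_apply, Matrix.one_apply_eq, smul_eq_mul,
        mul_one, ha]
      ring
    obtain ⟨g, hcase⟩ := canon Z hZ0 htr
    -- the conjugate of X lies in conjSub g S and equals a•1 + g Z g⁻¹
    have hmem : (g : M2) * X * (↑g⁻¹ : M2) ∈ conjSub g S := ⟨X, hXS, rfl⟩
    have hXsplit : (g : M2) * X * (↑g⁻¹ : M2) = a • (1:M2) + (g : M2) * Z * (↑g⁻¹ : M2) := by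
      rw [hZdef]
      have : (g : M2) * (X - a • 1) * (↑g⁻¹ : M2)
          = (g : M2) * X * (↑g⁻¹ : M2) - a • ((g : M2) * (↑g⁻¹ : M2)) := by
        rw [mul_sub, sub_mul, Matrix.mul_smul, Matrix.mul_one, Matrix.smul_mul]
      rw [this, ggi]
      abel
    have hs' : LieAlgebra.IsSolvable (conjSub g S) := isSolvable_conjSub g S hsolv
    rcases hcase with ⟨μ, hμ, hg⟩ | ⟨μ, hμ, hg⟩ | hg
    · apply exits g
      apply keyH (conjSub g S) hs' a μ hμ
      rw [← hg, ← hXsplit]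
      exact hmem
    · apply exits g
      apply keyJ (conjSub g S) hs' a μ hμ
      rw [← hg, ← hXsplit]
      exact hmem
    · apply exits g
      apply keyE (conjSub g S) hs' a 1 one_ne_zero
      rw [one_smul, ← hg, ← hXsplit]
      exact hmem
  · -- every element of S is scalar; S is contained in U
    push_neg at hns
    apply exits 1
    left
    rw [conjSub_one]
    intro X hX
    have h := hns X hX
    have h0 : X - ((X 0 0 + X 1 1)/2) • (1:M2) = 0 := not_not.mp (by simpa using h)
    rw [mem_U]
    have := congrFun (congrFun h0 1) 0
    simpa [Matrix.one_apply] using this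

end Stmt9


/-- every maximal solvable Lie subalgebra of gl(2,ℝ) is conjugate by an
element of GL(2,ℝ) either to the upper triangular matrices or to
{a·I + b·J : a, b ∈ ℝ} with J = [[0,1],[-1,0]]. -/
theorem stmt9 (S : LieSubalgebra ℝ (Matrix (Fin 2) (Fin 2) ℝ))
    (hsolv : LieAlgebra.IsSolvable S)
    (hmax : ∀ T : LieSubalgebra ℝ (Matrix (Fin 2) (Fin 2) ℝ),
      LieAlgebra.IsSolvable T → S ≤ T → S = T) :
    ∃ g : GL (Fin 2) ℝ,
      {B : Matrix (Fin 2) (Fin 2) ℝ | ∃ A ∈ S, B = (g : Matrix (Fin 2) (Fin 2) ℝ) * A * (↑g⁻¹ : Matrix (Fin 2) (Fin 2) ℝ)} =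
          {B : Matrix (Fin 2) (Fin 2) ℝ | B 1 0 = 0} ∨
      {B : Matrix (Fin 2) (Fin 2) ℝ | ∃ A ∈ S, B = (g : Matrix (Fin 2) (Fin 2) ℝ) * A * (↑g⁻¹ : Matrix (Fin 2) (Fin 2) ℝ)} =
          {B : Matrix (Fin 2) (Fin 2) ℝ | ∃ a b : ℝ, B = a • (1 : Matrix (Fin 2) (Fin 2) ℝ) + b • !![0, 1; -1, 0]} :=
  Stmt9.main S hsolv hmax
end

section
/- The Lie subalgebra of Der(ℂ[x,y]) spanned by x·∂/∂x, y·∂/∂y, ∂/∂x, ∂/∂y, y·∂/∂x, …, y^k·∂/∂x (for k ≥ 1) is solvable, and its derived subalgebra equals the span of ∂/∂x, ∂/∂y, y·∂/∂x, …, y^k·∂/∂x. -/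
open MvPolynomial

noncomputable section

section Aux

lemma B1 : ⁅vf Xv 0, vf 0 Yv⁆ = 0 := by
  apply derivation_ext; intro n; fin_cases n <;>
    simp [Derivation.commutator_apply, vf, Xv, Yv, mkDerivation_X]

lemma B2 (i : ℕ) : ⁅vf Xv 0, vf (Yv ^ i) 0⁆ = -(vf (Yv ^ i) 0) := by
  apply derivation_ext; intro n; fin_cases n <;>
    simp [Derivation.commutator_apply, vf, Xv, Yv, mkDerivation_X, Derivation.leibniz_pow]

lemma B2' : ⁅vf Xv 0, vf 1 0⁆ = -(vf 1 0) := by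
  have := B2 0; rw [pow_zero] at this; exact this

lemma B3 : ⁅vf Xv 0, vf 0 1⁆ = 0 := by
  apply derivation_ext; intro n; fin_cases n <;>
    simp [Derivation.commutator_apply, vf, Xv, Yv, mkDerivation_X]

lemma B5 : ⁅vf 0 Yv, vf 0 1⁆ = -(vf 0 1) := by
  apply derivation_ext; intro n; fin_cases n <;>
    simp [Derivation.commutator_apply, vf, Xv, Yv, mkDerivation_X]

lemma B6 (i : ℕ) : ⁅vf 0 Yv, vf (Yv ^ i) 0⁆ = (i : ℂ) • vf (Yv ^ i) 0 := by
  apply derivation_ext; intro n; fin_cases n <;>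
    simp [Derivation.commutator_apply, vf, Xv, Yv, mkDerivation_X, Derivation.leibniz_pow,
      smul_eq_C_mul] <;>
  rcases i with _ | i <;> simp [pow_succ]

lemma B4 : ⁅vf 0 Yv, vf 1 0⁆ = 0 := by
  have := B6 0; rw [pow_zero] at this; simpa using this

lemma B9 (i : ℕ) : ⁅vf 0 1, vf (Yv ^ (i+1)) 0⁆ = ((i+1 : ℕ) : ℂ) • vf (Yv ^ i) 0 := by
  apply derivation_ext; intro n; fin_cases n <;>
    simp [Derivation.commutator_apply, vf, Xv, Yv, mkDerivation_X, Derivation.leibniz_pow,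
      smul_eq_C_mul]

lemma B10 (i j : ℕ) : ⁅vf (Yv ^ i) 0, vf (Yv ^ j) 0⁆ = 0 := by
  apply derivation_ext; intro n; fin_cases n <;>
    simp [Derivation.commutator_apply, vf, Xv, Yv, mkDerivation_X, Derivation.leibniz_pow]

lemma B8 (i : ℕ) : ⁅vf 1 0, vf (Yv ^ i) 0⁆ = 0 := by
  have := B10 0 i; rw [pow_zero] at this; exact this

lemma B7 : ⁅vf 1 0, vf 0 1⁆ = 0 := by
  apply derivation_ext; intro n; fin_cases n <;>
    simp [Derivation.commutator_apply, vf, Xv, Yv, mkDerivation_X]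

/-- generators of the full algebra -/
def S1set (k : ℕ) : Set Der2 :=
  {vf Xv 0, vf 0 Yv, vf 1 0, vf 0 1} ∪ {D | ∃ i, 1 ≤ i ∧ i ≤ k ∧ D = vf (Yv ^ i) 0}

/-- generators of the derived algebra -/
def S2set (k : ℕ) : Set Der2 :=
  {vf 1 0, vf 0 1} ∪ {D | ∃ i, 1 ≤ i ∧ i ≤ k ∧ D = vf (Yv ^ i) 0}

/-- an abelian set of derivations -/
def S3set : Set Der2 := {D | ∃ i, D = vf (Yv ^ i) 0}

lemma S2_sub_S1 (k : ℕ) : S2set k ⊆ S1set k := by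
  rintro D (h | h)
  · rcases h with h | h
    · exact Or.inl (Or.inr (Or.inr (Or.inl h)))
    · exact Or.inl (Or.inr (Or.inr (Or.inr h)))
  · exact Or.inr h

lemma memE2 (k j : ℕ) (h : j ≤ k) : vf (Yv ^ j) 0 ∈ Submodule.span ℂ (S2set k) := by
  rcases Nat.eq_zero_or_pos j with rfl | hj
  · rw [pow_zero]; exact Submodule.subset_span (Or.inl (Or.inl rfl))
  · exact Submodule.subset_span (Or.inr ⟨j, hj, h, rfl⟩)

lemma memE3 (j : ℕ) : vf (Yv ^ j) 0 ∈ Submodule.span ℂ S3set :=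
  Submodule.subset_span ⟨j, rfl⟩


lemma dlie_add (a y z : Der2) : ⁅a, y + z⁆ = ⁅a, y⁆ + ⁅a, z⁆ := lie_add a y z
lemma dadd_lie (a y z : Der2) : ⁅a + y, z⁆ = ⁅a, z⁆ + ⁅y, z⁆ := add_lie a y z
lemma dlie_smul (c : ℂ) (a y : Der2) : ⁅a, c • y⁆ = c • ⁅a, y⁆ := lie_smul c a y
lemma dsmul_lie (c : ℂ) (a y : Der2) : ⁅c • a, y⁆ = c • ⁅a, y⁆ := smul_lie c a y
lemma dlie_zero (a : Der2) : ⁅a, (0 : Der2)⁆ = 0 := lie_zero a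
lemma dzero_lie (a : Der2) : ⁅(0 : Der2), a⁆ = 0 := zero_lie a

lemma bracket_span_span {s t : Set Der2} {P : Submodule ℂ Der2}
    (h : ∀ a ∈ s, ∀ b ∈ t, ⁅a, b⁆ ∈ P) :
    ∀ x ∈ Submodule.span ℂ s, ∀ y ∈ Submodule.span ℂ t, ⁅x, y⁆ ∈ P := by
  intro x hx
  induction hx using Submodule.span_induction with
  | mem a ha =>
    intro y hy
    induction hy using Submodule.span_induction with
    | mem b hb => exact h a ha b hb
    | zero => rw [dlie_zero]; exact P.zero_mem
    | add y z _ _ hy hz => rw [dlie_add]; exact P.add_mem hy hz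
    | smul c y _ hy => rw [dlie_smul]; exact P.smul_mem c hy
  | zero => intro y hy; rw [dzero_lie]; exact P.zero_mem
  | add x z _ _ hx hz => intro y hy; rw [dadd_lie]; exact P.add_mem (hx y hy) (hz y hy)
  | smul c x _ hx => intro y hy; rw [dsmul_lie]; exact P.smul_mem c (hx y hy)

lemma skew_mem {P : Submodule ℂ Der2} {a b : Der2} (h : ⁅a, b⁆ ∈ P) : ⁅b, a⁆ ∈ P := by
  rw [← lie_skew]; exact P.neg_mem h

lemma L1 (k : ℕ) : ∀ a ∈ S1set k, ∀ b ∈ S1set k, ⁅a, b⁆ ∈ Submodule.span ℂ (S2set k) := by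
  have memE := memE2 k
  have e0 : vf 1 0 ∈ Submodule.span ℂ (S2set k) :=
    Submodule.subset_span (Or.inl (Or.inl rfl))
  have f0 : vf 0 1 ∈ Submodule.span ℂ (S2set k) :=
    Submodule.subset_span (Or.inl (Or.inr rfl))
  have key : ∀ a ∈ S1set k, ∀ b ∈ S1set k,
      ⁅a, b⁆ ∈ Submodule.span ℂ (S2set k) ∨ ⁅b, a⁆ ∈ Submodule.span ℂ (S2set k) := by
    rintro a ha b hb
    rcases ha with (rfl | rfl | rfl | rfl) | ⟨i, hi1, hik, rfl⟩
    · -- a = vf Xv 0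
      rcases hb with (rfl | rfl | rfl | rfl) | ⟨j, hj1, hjk, rfl⟩
      · left; rw [lie_self]; exact Submodule.zero_mem _
      · left; rw [B1]; exact Submodule.zero_mem _
      · left; rw [B2']; exact Submodule.neg_mem _ e0
      · left; rw [B3]; exact Submodule.zero_mem _
      · left; rw [B2]; exact Submodule.neg_mem _ (memE j hjk)
    · -- a = vf 0 Yv
      rcases hb with (rfl | rfl | rfl | rfl) | ⟨j, hj1, hjk, rfl⟩
      · right; rw [B1]; exact Submodule.zero_mem _
      · left; rw [lie_self]; exact Submodule.zero_mem _
      · left; rw [B4]; exact Submodule.zero_mem _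
      · left; rw [B5]; exact Submodule.neg_mem _ f0
      · left; rw [B6]; exact Submodule.smul_mem _ _ (memE j hjk)
    · -- a = vf 1 0
      rcases hb with (rfl | rfl | rfl | rfl) | ⟨j, hj1, hjk, rfl⟩
      · right; rw [B2']; exact Submodule.neg_mem _ e0
      · right; rw [B4]; exact Submodule.zero_mem _
      · left; rw [lie_self]; exact Submodule.zero_mem _
      · left; rw [B7]; exact Submodule.zero_mem _
      · left; rw [B8]; exact Submodule.zero_mem _
    · -- a = vf 0 1
      rcases hb with (rfl | rfl | rfl | rfl) | ⟨j, hj1, hjk, rfl⟩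
      · right; rw [B3]; exact Submodule.zero_mem _
      · right; rw [B5]; exact Submodule.neg_mem _ f0
      · right; rw [B7]; exact Submodule.zero_mem _
      · left; rw [lie_self]; exact Submodule.zero_mem _
      · obtain ⟨j', rfl⟩ : ∃ j', j = j' + 1 := ⟨j - 1, (Nat.succ_pred_eq_of_pos hj1).symm⟩
        left; rw [B9]
        exact Submodule.smul_mem _ _ (memE j' (le_trans (Nat.le_succ j') hjk))
    · -- a = vf (Yv ^ i) 0
      rcases hb with (rfl | rfl | rfl | rfl) | ⟨j, hj1, hjk, rfl⟩
      · right; rw [B2]; exact Submodule.neg_mem _ (memE i hik)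
      · right; rw [B6]; exact Submodule.smul_mem _ _ (memE i hik)
      · right; rw [B8]; exact Submodule.zero_mem _
      · obtain ⟨i', rfl⟩ : ∃ i', i = i' + 1 := ⟨i - 1, (Nat.succ_pred_eq_of_pos hi1).symm⟩
        right; rw [B9]
        exact Submodule.smul_mem _ _ (memE i' (le_trans (Nat.le_succ i') hik))
      · left; rw [B10]; exact Submodule.zero_mem _
  intro a ha b hb
  rcases key a ha b hb with h | h
  · exact h
  · exact skew_mem h

lemma L2 (k : ℕ) : ∀ a ∈ S2set k, ∀ b ∈ S2set k, ⁅a, b⁆ ∈ Submodule.span ℂ S3set := by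
  have key : ∀ a ∈ S2set k, ∀ b ∈ S2set k,
      ⁅a, b⁆ ∈ Submodule.span ℂ S3set ∨ ⁅b, a⁆ ∈ Submodule.span ℂ S3set := by
    rintro a ha b hb
    rcases ha with (rfl | rfl) | ⟨i, hi1, hik, rfl⟩
    · rcases hb with (rfl | rfl) | ⟨j, hj1, hjk, rfl⟩
      · left; rw [lie_self]; exact Submodule.zero_mem _
      · left; rw [B7]; exact Submodule.zero_mem _
      · left; rw [B8]; exact Submodule.zero_mem _
    · rcases hb with (rfl | rfl) | ⟨j, hj1, hjk, rfl⟩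
      · right; rw [B7]; exact Submodule.zero_mem _
      · left; rw [lie_self]; exact Submodule.zero_mem _
      · obtain ⟨j', rfl⟩ : ∃ j', j = j' + 1 := ⟨j - 1, (Nat.succ_pred_eq_of_pos hj1).symm⟩
        left; rw [B9]; exact Submodule.smul_mem _ _ (memE3 j')
    · rcases hb with (rfl | rfl) | ⟨j, hj1, hjk, rfl⟩
      · right; rw [B8]; exact Submodule.zero_mem _
      · obtain ⟨i', rfl⟩ : ∃ i', i = i' + 1 := ⟨i - 1, (Nat.succ_pred_eq_of_pos hi1).symm⟩
        right; rw [B9]; exact Submodule.smul_mem _ _ (memE3 i')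
      · left; rw [B10]; exact Submodule.zero_mem _
  intro a ha b hb
  rcases key a ha b hb with h | h
  · exact h
  · exact skew_mem h

lemma L3 : ∀ a ∈ S3set, ∀ b ∈ S3set, ⁅a, b⁆ ∈ (⊥ : Submodule ℂ Der2) := by
  rintro a ⟨i, rfl⟩ b ⟨j, rfl⟩
  rw [B10]; exact Submodule.zero_mem _

/-- The Lie subalgebra. -/
def gSub (k : ℕ) : LieSubalgebra ℂ Der2 :=
  { Submodule.span ℂ (S1set k) with
    lie_mem' := fun {x y} hx hy =>
      Submodule.span_mono (S2_sub_S1 k) (bracket_span_span (L1 k) x hx y hy) }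

lemma mem_gSub {k : ℕ} {x : Der2} : x ∈ gSub k ↔ x ∈ Submodule.span ℂ (S1set k) := Iff.rfl

lemma derived_step {k : ℕ} {I : LieIdeal ℂ (gSub k)} {P Q : Submodule ℂ Der2}
    (hI : ∀ x : gSub k, x ∈ I → (x : Der2) ∈ P)
    (hb : ∀ a b : Der2, a ∈ P → b ∈ P → ⁅a, b⁆ ∈ Q) :
    ∀ x : gSub k, x ∈ ⁅I, I⁆ → (x : Der2) ∈ Q := by
  intro x hx
  rw [← LieSubmodule.mem_toSubmodule, LieSubmodule.lieIdeal_oper_eq_linear_span'] at hx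
  induction hx using Submodule.span_induction with
  | mem m hm =>
    obtain ⟨a, ha, b, hb', rfl⟩ := hm
    exact hb _ _ (hI a ha) (hI b hb')
  | zero => simpa using Q.zero_mem
  | add y z _ _ hy hz => simpa using Q.add_mem hy hz
  | smul c y _ hy => simpa using Q.smul_mem c hy

lemma gSub_solvable (k : ℕ) : LieAlgebra.IsSolvable (gSub k) := by
  rw [LieAlgebra.isSolvable_iff ℂ]
  refine ⟨3, ?_⟩
  have h0 : ∀ x : gSub k, x ∈ LieAlgebra.derivedSeries ℂ (gSub k) 0 →
      (x : Der2) ∈ Submodule.span ℂ (S1set k) := fun x _ => x.2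
  have h1 : ∀ x : gSub k, x ∈ LieAlgebra.derivedSeries ℂ (gSub k) 1 →
      (x : Der2) ∈ Submodule.span ℂ (S2set k) := by
    rw [LieAlgebra.derivedSeries_def, LieAlgebra.derivedSeriesOfIdeal_succ]
    exact derived_step h0 (fun a b ha hb => bracket_span_span (L1 k) a ha b hb)
  have h2 : ∀ x : gSub k, x ∈ LieAlgebra.derivedSeries ℂ (gSub k) 2 →
      (x : Der2) ∈ Submodule.span ℂ S3set := by
    rw [LieAlgebra.derivedSeries_def, LieAlgebra.derivedSeriesOfIdeal_succ]
    exact derived_step h1 (fun a b ha hb => bracket_span_span (L2 k) a ha b hb)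
  have h3 : ∀ x : gSub k, x ∈ LieAlgebra.derivedSeries ℂ (gSub k) 3 →
      (x : Der2) ∈ (⊥ : Submodule ℂ Der2) := by
    rw [LieAlgebra.derivedSeries_def, LieAlgebra.derivedSeriesOfIdeal_succ]
    exact derived_step h2 (fun a b ha hb => bracket_span_span L3 a ha b hb)
  rw [eq_bot_iff]
  intro x hx
  have := h3 x hx
  rw [Submodule.mem_bot] at this
  have : x = 0 := Subtype.ext this
  simp [this]

end Aux

/-- the Lie subalgebra of Der(ℂ[x,y]) spanned by x·∂/∂x, y·∂/∂y, ∂/∂x,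
∂/∂y, y·∂/∂x, …, y^k·∂/∂x (k ≥ 1) is solvable and its derived subalgebra (the span of
all brackets) is the span of ∂/∂x, ∂/∂y, y·∂/∂x, …, y^k·∂/∂x. -/
theorem stmt10 (k : ℕ) (hk : 1 ≤ k) :
    ∃ g : LieSubalgebra ℂ Der2,
      (g : Set Der2) = (Submodule.span ℂ
          ({vf Xv 0, vf 0 Yv, vf 1 0, vf 0 1} ∪ {D | ∃ i, 1 ≤ i ∧ i ≤ k ∧ D = vf (Yv ^ i) 0})
            : Set Der2) ∧
      LieAlgebra.IsSolvable g ∧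
      Submodule.span ℂ {Z : Der2 | ∃ X ∈ g, ∃ Y ∈ g, Z = ⁅X, Y⁆} =
        Submodule.span ℂ ({vf 1 0, vf 0 1} ∪ {D | ∃ i, 1 ≤ i ∧ i ≤ k ∧ D = vf (Yv ^ i) 0}) := by
  refine ⟨gSub k, rfl, gSub_solvable k, ?_⟩
  have memg : ∀ D ∈ S1set k, D ∈ gSub k := fun D hD => Submodule.subset_span hD
  apply le_antisymm
  · rw [Submodule.span_le]
    rintro Z ⟨A, hA, B, hB, rfl⟩
    exact bracket_span_span (L1 k) A (mem_gSub.mp hA) B (mem_gSub.mp hB)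
  · rw [Submodule.span_le]
    rintro D ((rfl | rfl) | ⟨i, hi1, hik, rfl⟩)
    · apply Submodule.subset_span
      refine ⟨vf 1 0, memg _ (Or.inl (Or.inr (Or.inr (Or.inl rfl)))),
        vf Xv 0, memg _ (Or.inl (Or.inl rfl)), ?_⟩
      rw [← lie_skew, B2', neg_neg]
    · apply Submodule.subset_span
      refine ⟨vf 0 1, memg _ (Or.inl (Or.inr (Or.inr (Or.inr rfl)))),
        vf 0 Yv, memg _ (Or.inl (Or.inr (Or.inl rfl))), ?_⟩
      rw [← lie_skew, B5, neg_neg]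
    · apply Submodule.subset_span
      refine ⟨vf (Yv ^ i) 0, memg _ (Or.inr ⟨i, hi1, hik, rfl⟩),
        vf Xv 0, memg _ (Or.inl (Or.inl rfl)), ?_⟩
      rw [← lie_skew, B2, neg_neg]
end
end
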